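/- Let G be a finite simple graph and let σ and σ' be finite sequences of edges of G such that σ' is obtained from σ by deleting a single edge. Let M and M' be the matchings computed by the greedy maximal-matching algorithm (which processes edges in order and adds an edge iff both its endpoints are currently unmatched) on σ and σ' respectively. Then | |M| − |M'| | ≤ 1. -/
import Mathlib

open Classical in
/-- The greedy maximal-matching algorithm: process edges in order, adding an
edge iff it is not a loop and both its endpoints are currently unmatched. -/
noncomputable def greedyMatching {V : Type*} (σ : List (Sym2 V)) : Finset (Sym2 V) :=
  σ.foldl (fun M e =>
    if ¬ e.IsDiag ∧ ∀ f ∈ M, ∀ v, v ∈ e → v ∉ f then insert e M else M) ∅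

namespace GreedyRobustAux

open Classical

variable {V : Type*}

open Classical in
noncomputable def gstep (M : Finset (Sym2 V)) (e : Sym2 V) : Finset (Sym2 V) :=
  if ¬ e.IsDiag ∧ ∀ f ∈ M, ∀ v, v ∈ e → v ∉ f then insert e M else M

lemma greedy_eq (σ : List (Sym2 V)) : greedyMatching σ = σ.foldl gstep ∅ := rfl

/-- Set of matched vertices. -/
def matched (M : Finset (Sym2 V)) : Set V := {v | ∃ f ∈ M, v ∈ f}

/-- The condition for adding. -/
def Free (M : Finset (Sym2 V)) (e : Sym2 V) : Prop :=
  ¬ e.IsDiag ∧ ∀ v ∈ e, v ∉ matched M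

lemma cond_iff (M : Finset (Sym2 V)) (e : Sym2 V) :
    (¬ e.IsDiag ∧ ∀ f ∈ M, ∀ v, v ∈ e → v ∉ f) ↔ Free M e := by
  unfold Free
  constructor <;> rintro ⟨h1, h2⟩ <;> refine ⟨h1, ?_⟩
  · rintro v hv ⟨f, hf, hvf⟩; exact h2 f hf v hv hvf
  · intro f hf v hv hvf; exact h2 v hv ⟨f, hf, hvf⟩

lemma gstep_pos {M : Finset (Sym2 V)} {e : Sym2 V} (h : Free M e) :
    gstep M e = insert e M := by
  rw [gstep, if_pos ((cond_iff M e).mpr h)]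

lemma gstep_neg {M : Finset (Sym2 V)} {e : Sym2 V} (h : ¬ Free M e) :
    gstep M e = M := by
  rw [gstep, if_neg (fun hc => h ((cond_iff M e).mp hc))]

lemma free_iff {M : Finset (Sym2 V)} {x y : V} (hxy : x ≠ y) :
    Free M s(x, y) ↔ x ∉ matched M ∧ y ∉ matched M := by
  constructor
  · intro hf; exact ⟨hf.2 x (by simp), hf.2 y (by simp)⟩
  · intro hf
    refine ⟨by simpa [Sym2.mk_isDiag_iff] using hxy, ?_⟩
    intro v hv
    rcases Sym2.mem_iff.mp hv with rfl | rfl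
    · exact hf.1
    · exact hf.2

lemma matched_insert (M : Finset (Sym2 V)) (e : Sym2 V) :
    matched (insert e M) = matched M ∪ {v | v ∈ e} := by
  ext w
  simp only [matched, Finset.mem_insert, Set.mem_union, Set.mem_setOf_eq]
  constructor
  · rintro ⟨f, hf | hf, hw⟩
    · right; exact hf ▸ hw
    · left; exact ⟨f, hf, hw⟩
  · rintro (⟨f, hf, hw⟩ | hw)
    · exact ⟨f, Or.inr hf, hw⟩
    · exact ⟨e, Or.inl rfl, hw⟩

lemma notMem_of_free {M : Finset (Sym2 V)} {e : Sym2 V} (h : Free M e) : e ∉ M := by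
  intro hmem
  induction e using Sym2.ind with
  | _ x y => exact h.2 x (by simp) ⟨_, hmem, by simp⟩

lemma matched_gstep_pos {M : Finset (Sym2 V)} {x y : V} (h : Free M s(x, y)) :
    matched (gstep M s(x, y)) = matched M ∪ {x, y} := by
  rw [gstep_pos h, matched_insert]
  ext z
  simp only [Set.mem_union, Set.mem_setOf_eq, Sym2.mem_iff, Set.mem_insert_iff,
    Set.mem_singleton_iff]

lemma card_gstep_pos {M : Finset (Sym2 V)} {e : Sym2 V} (h : Free M e) :
    (gstep M e).card = M.card + 1 := by
  rw [gstep_pos h]; exact Finset.card_insert_of_notMem (notMem_of_free h)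

/-- One run has one extra edge covering two extra vertices. -/
def Big (p q : Finset (Sym2 V)) : Prop :=
  ∃ u v : V, u ≠ v ∧ u ∉ matched q ∧ v ∉ matched q ∧
    matched p = matched q ∪ {u, v} ∧ p.card = q.card + 1

/-- Each run has exactly one private matched vertex. -/
def Swap (p q : Finset (Sym2 V)) : Prop :=
  ∃ u v : V, u ≠ v ∧ u ∈ matched p ∧ u ∉ matched q ∧ v ∈ matched q ∧ v ∉ matched p ∧
    matched p ∪ {v} = matched q ∪ {u} ∧ p.card = q.card

def Inv (p q : Finset (Sym2 V)) : Prop :=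
  (matched p = matched q ∧ p.card = q.card) ∨ Big p q ∨ Big q p ∨ Swap p q

lemma Inv.symm {p q : Finset (Sym2 V)} (h : Inv p q) : Inv q p := by
  rcases h with ⟨h1, h2⟩ | h | h | ⟨u, v, h1, h2, h3, h4, h5, h6, h7⟩
  · exact Or.inl ⟨h1.symm, h2.symm⟩
  · exact Or.inr (Or.inr (Or.inl h))
  · exact Or.inr (Or.inl h)
  · exact Or.inr (Or.inr (Or.inr ⟨v, u, h1.symm, h4, h5, h2, h3, h6.symm, h7.symm⟩))

/-- Helper for the "Big, middle" subcase: the second run inserts an edge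
`{u, y}` sharing vertex `u` with the extra pair `{u, v}` of the first run. -/
lemma big_mid {p q q' : Finset (Sym2 V)} {u v y : V}
    (hu : u ∉ matched q) (hv : v ∉ matched q) (hy : y ∉ matched q)
    (huv : u ≠ v) (huy : u ≠ y)
    (h1 : matched p = matched q ∪ {u, v}) (hc : p.card = q.card + 1)
    (h2 : matched q' = matched q ∪ {u, y}) (hc' : q'.card = q.card + 1) :
    Inv p q' := by
  by_cases hyv : y = v
  · subst hyv
    exact Or.inl ⟨by rw [h1, h2], by omega⟩
  · refine Or.inr (Or.inr (Or.inr ⟨v, y, fun h => hyv h.symm, ?_, ?_, ?_, ?_, ?_, by omega⟩))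
    · rw [h1]; simp
    · rw [h2]
      simp only [Set.mem_union, Set.mem_insert_iff, Set.mem_singleton_iff]
      push_neg
      exact ⟨hv, fun h => huv h.symm, fun h => hyv h.symm⟩
    · rw [h2]; simp
    · rw [h1]
      simp only [Set.mem_union, Set.mem_insert_iff, Set.mem_singleton_iff]
      push_neg
      exact ⟨hy, fun h => huy h.symm, hyv⟩
    · rw [h1, h2]; ext z
      simp only [Set.mem_union, Set.mem_insert_iff, Set.mem_singleton_iff]; tauto

/-- Helper for the "Swap" subcase: the first run inserts an edge `{v, w}`
through its free vertex `v` (the private vertex of `q`). -/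
lemma swap_grow {p q p' : Finset (Sym2 V)} {u v w : V}
    (h2 : u ∈ matched p) (h3 : u ∉ matched q) (h5 : v ∉ matched p)
    (h6 : matched p ∪ {v} = matched q ∪ {u}) (h7 : p.card = q.card)
    (hw : w ∉ matched p) (hwv : w ≠ v)
    (hp' : matched p' = matched p ∪ {v, w}) (hc' : p'.card = p.card + 1) :
    Big p' q := by
  have hwB : w ∉ matched q := by
    intro hwq
    have : w ∈ matched q ∪ {u} := Or.inl hwq
    rw [← h6] at this
    rcases this with h | h
    · exact hw h
    · exact hwv h
  refine ⟨u, w, fun h => hw (h ▸ h2), h3, hwB, ?_, by omega⟩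
  rw [hp']
  ext z
  have hz := Set.ext_iff.mp h6 z
  simp only [Set.mem_union, Set.mem_insert_iff, Set.mem_singleton_iff] at hz ⊢
  tauto

/-- The asymmetric step case: `p` can take the edge but `q` cannot. -/
lemma step_asym {p q : Finset (Sym2 V)} {x y : V} (hxy : x ≠ y) (h : Inv p q)
    (hp : Free p s(x, y)) (hq : ¬ Free q s(x, y)) :
    Inv (gstep p s(x, y)) (gstep q s(x, y)) := by
  obtain ⟨hxp, hyp⟩ := (free_iff hxy).mp hp
  have hqm : x ∈ matched q ∨ y ∈ matched q := by
    by_contra hc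
    push_neg at hc
    exact hq ((free_iff hxy).mpr ⟨hc.1, hc.2⟩)
  have mp := matched_gstep_pos hp
  have cp := card_gstep_pos hp
  rw [gstep_neg hq]
  rcases h with ⟨h1, h2⟩ | ⟨u, v, h1, h2, h3, h4, h5⟩ | ⟨u, v, h1, h2, h3, h4, h5⟩ |
      ⟨u, v, h1, h2, h3, h4, h5, h6, h7⟩
  · -- equal matched sets: contradiction
    rw [← h1] at hqm
    rcases hqm with h | h
    · exact absurd h hxp
    · exact absurd h hyp
  · -- Big p q: matched q ⊆ matched p, contradiction
    exfalso
    rcases hqm with h | h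
    · exact hxp (by rw [h4]; exact Or.inl h)
    · exact hyp (by rw [h4]; exact Or.inl h)
  · -- Big q p: the inserted edge must touch {u, v}
    have hxq : x ∉ matched p := hxp
    have hmem : x = u ∨ x = v ∨ y = u ∨ y = v := by
      rcases hqm with h | h
      · rw [h4] at h
        rcases h with h | h | h
        · exact absurd h hxp
        · exact Or.inl h
        · exact Or.inr (Or.inl h)
      · rw [h4] at h
        rcases h with h | h | h
        · exact absurd h hyp
        · exact Or.inr (Or.inr (Or.inl h))
        · exact Or.inr (Or.inr (Or.inr h))
    have hcomm : ∀ a b : V, matched q = matched p ∪ {a, b} → matched q = matched p ∪ {b, a} := by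
      intro a b hab
      rw [hab, Set.pair_comm]
    rcases hmem with rfl | rfl | rfl | rfl
    · exact (big_mid h2 h3 hyp h1 hxy h4 h5 mp cp).symm
    · exact (big_mid h3 h2 hyp h1.symm hxy (hcomm u x h4) h5 mp cp).symm
    · have mp' : matched (gstep p s(x, y)) = matched p ∪ {y, x} := by
        rw [mp, Set.pair_comm]
      exact (big_mid h2 h3 hxp h1 (fun h => hxy h.symm) h4 h5 mp' cp).symm
    · have mp' : matched (gstep p s(x, y)) = matched p ∪ {y, x} := by
        rw [mp, Set.pair_comm]
      exact (big_mid h3 h2 hxp h1.symm (fun h => hxy h.symm) (hcomm u y h4) h5 mp' cp).symm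
  · -- Swap: the inserted edge must touch v
    have hv : x = v ∨ y = v := by
      rcases hqm with h | h
      · have : x ∈ matched p ∪ {v} := by rw [h6]; exact Or.inl h
        rcases this with h' | h'
        · exact absurd h' hxp
        · exact Or.inl h'
      · have : y ∈ matched p ∪ {v} := by rw [h6]; exact Or.inl h
        rcases this with h' | h'
        · exact absurd h' hyp
        · exact Or.inr h'
    rcases hv with rfl | rfl
    · exact Or.inr (Or.inl (swap_grow h2 h3 hxp h6 h7 hyp (fun h => hxy h.symm) mp cp))
    · have mp' : matched (gstep p s(x, y)) = matched p ∪ {y, x} := by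
        rw [mp, Set.pair_comm]
      exact Or.inr (Or.inl (swap_grow h2 h3 hyp h6 h7 hxp hxy mp' cp))

/-- Main step lemma: one greedy step preserves the invariant. -/
lemma Inv.step {p q : Finset (Sym2 V)} (h : Inv p q) (e : Sym2 V) :
    Inv (gstep p e) (gstep q e) := by
  induction e using Sym2.ind with
  | _ x y =>
  by_cases hd : (s(x, y) : Sym2 V).IsDiag
  · rw [gstep_neg (fun hc => hc.1 hd), gstep_neg (fun hc => hc.1 hd)]; exact h
  have hxy : x ≠ y := by simpa [Sym2.mk_isDiag_iff] using hd
  by_cases hp : Free p s(x, y)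
  case neg =>
    by_cases hq : Free q s(x, y)
    · exact (step_asym hxy h.symm hq hp).symm
    · rw [gstep_neg hp, gstep_neg hq]; exact h
  by_cases hq : Free q s(x, y)
  case neg => exact step_asym hxy h hp hq
  · obtain ⟨hxp, hyp⟩ := (free_iff hxy).mp hp
    obtain ⟨hxq, hyq⟩ := (free_iff hxy).mp hq
    have mp := matched_gstep_pos hp
    have mq := matched_gstep_pos hq
    have cp := card_gstep_pos hp
    have cq := card_gstep_pos hq
    rcases h with ⟨h1, h2⟩ | ⟨u, v, h1, h2, h3, h4, h5⟩ | ⟨u, v, h1, h2, h3, h4, h5⟩ |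
        ⟨u, v, h1, h2, h3, h4, h5, h6, h7⟩
    · exact Or.inl ⟨by rw [mp, mq, h1], by omega⟩
    · have hup : u ∈ matched p := by rw [h4]; simp
      have hvp : v ∈ matched p := by rw [h4]; simp
      refine Or.inr (Or.inl ⟨u, v, h1, ?_, ?_, ?_, by omega⟩)
      · rw [mq]
        simp only [Set.mem_union, Set.mem_insert_iff, Set.mem_singleton_iff]
        push_neg
        exact ⟨h2, fun h => hxp (h ▸ hup), fun h => hyp (h ▸ hup)⟩
      · rw [mq]
        simp only [Set.mem_union, Set.mem_insert_iff, Set.mem_singleton_iff]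
        push_neg
        exact ⟨h3, fun h => hxp (h ▸ hvp), fun h => hyp (h ▸ hvp)⟩
      · rw [mp, mq, h4]; ext z
        simp only [Set.mem_union, Set.mem_insert_iff, Set.mem_singleton_iff]; tauto
    · have huq : u ∈ matched q := by rw [h4]; simp
      have hvq : v ∈ matched q := by rw [h4]; simp
      refine Or.inr (Or.inr (Or.inl ⟨u, v, h1, ?_, ?_, ?_, by omega⟩))
      · rw [mp]
        simp only [Set.mem_union, Set.mem_insert_iff, Set.mem_singleton_iff]
        push_neg
        exact ⟨h2, fun h => hxq (h ▸ huq), fun h => hyq (h ▸ huq)⟩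
      · rw [mp]
        simp only [Set.mem_union, Set.mem_insert_iff, Set.mem_singleton_iff]
        push_neg
        exact ⟨h3, fun h => hxq (h ▸ hvq), fun h => hyq (h ▸ hvq)⟩
      · rw [mp, mq, h4]; ext z
        simp only [Set.mem_union, Set.mem_insert_iff, Set.mem_singleton_iff]; tauto
    · refine Or.inr (Or.inr (Or.inr ⟨u, v, h1, ?_, ?_, ?_, ?_, ?_, by omega⟩))
      · rw [mp]; exact Or.inl h2
      · rw [mq]
        simp only [Set.mem_union, Set.mem_insert_iff, Set.mem_singleton_iff]
        push_neg
        exact ⟨h3, fun h => hxp (h ▸ h2), fun h => hyp (h ▸ h2)⟩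
      · rw [mq]; exact Or.inl h4
      · rw [mp]
        simp only [Set.mem_union, Set.mem_insert_iff, Set.mem_singleton_iff]
        push_neg
        exact ⟨h5, fun h => hxq (h ▸ h4), fun h => hyq (h ▸ h4)⟩
      · rw [mp, mq]; ext z
        have hz := Set.ext_iff.mp h6 z
        simp only [Set.mem_union, Set.mem_insert_iff, Set.mem_singleton_iff] at hz ⊢
        tauto

lemma Inv.fold {p q : Finset (Sym2 V)} (h : Inv p q) (σ : List (Sym2 V)) :
    Inv (σ.foldl gstep p) (σ.foldl gstep q) := by
  induction σ generalizing p q with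
  | nil => exact h
  | cons a l ih => exact ih (h.step a)

lemma Inv.card_bound {p q : Finset (Sym2 V)} (h : Inv p q) :
    |(p.card : ℤ) - (q.card : ℤ)| ≤ 1 := by
  rcases h with ⟨_, h2⟩ | ⟨u, v, _, _, _, _, h5⟩ | ⟨u, v, _, _, _, _, h5⟩ |
      ⟨u, v, _, _, _, _, _, _, h7⟩ <;> rw [abs_le] <;> constructor <;> omega

end GreedyRobustAux

open GreedyRobustAux

/-- Robustness of greedy matching: deleting a single edge from the stream
changes the size of the greedy matching by at most one. -/
theorem greedy_robust {V : Type*} (G : SimpleGraph V)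
    (σ₁ σ₂ : List (Sym2 V)) (e : Sym2 V)
    (hG : ∀ x ∈ σ₁ ++ e :: σ₂, x ∈ G.edgeSet) :
    |((greedyMatching (σ₁ ++ e :: σ₂)).card : ℤ)
      - ((greedyMatching (σ₁ ++ σ₂)).card : ℤ)| ≤ 1 := by
  rw [greedy_eq, greedy_eq, List.foldl_append, List.foldl_append, List.foldl_cons]
  set M := σ₁.foldl gstep ∅ with hM
  have hinit : Inv (gstep M e) M := by
    by_cases hf : Free M e
    · induction e using Sym2.ind with
      | _ x y =>
      have hxy : x ≠ y := by
        intro h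
        exact hf.1 (by simp [Sym2.mk_isDiag_iff, h])
      obtain ⟨hx, hy⟩ := (free_iff hxy).mp hf
      exact Or.inr (Or.inl ⟨x, y, hxy, hx, hy, matched_gstep_pos hf, card_gstep_pos hf⟩)
    · rw [gstep_neg hf]
      exact Or.inl ⟨rfl, rfl⟩
  exact (hinit.fold σ₂).card_bound
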